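/- In ℝ², let K be the closed unit disk centered at the origin and let N = ℓ₁ ∪ ℓ₂, where ℓ₁ is the closed segment from (0,−1) to (0,1) and ℓ₂ is the closed segment from (−1,0) to (1,0). Then the limit D_N(K) = lim_{ε→0⁺} (vol(K + εN) − vol(K))/ε exists and equals 4√2. -/

import Mathlib

open MeasureTheory Filter Set Metric
open scoped Pointwise InnerProductSpace ENNReal Topology

noncomputable section

/-- `ℝ^d` with the Euclidean metric. -/
abbrev Euc (d : ℕ) := EuclideanSpace ℝ (Fin d)

/-- `D_N(M) = L`: the limit `lim_{ε→0⁺} (vol(M + εN) − vol(M))/ε` exists and equals `L`.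
Here `M + ε • N` is the Minkowski sum and `vol` is `d`-dimensional Lebesgue measure. -/
def HasMinkDeriv {d : ℕ} (N M : Set (Euc d)) (L : ℝ) : Prop :=
  Tendsto (fun ε : ℝ => ((volume (M + ε • N)).toReal - (volume M).toReal) / ε)
    (𝓝[>] 0) (𝓝 L)

/-- `S` has zero `(d−1)`-dimensional upper Minkowski content:
`lim_{ε→0⁺} vol(S + εB)/ε = 0` where `B` is the closed unit ball. -/
def ZeroMinkowskiContent {d : ℕ} (S : Set (Euc d)) : Prop :=
  Tendsto (fun ε : ℝ => (volume (S + ε • closedBall (0 : Euc d) 1)).toReal / ε)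
    (𝓝[>] 0) (𝓝 0)

/-- `x` is a smooth (C¹) boundary point of `M` with outer unit normal `n`:
near `x`, `M` is a sublevel set `{g ≤ 0}` of a `C¹` function with nonvanishing
gradient, the boundary is the level set `{g = 0}`, and `n` is the direction of
the gradient of `g` at `x`. -/
def IsC1BoundaryPointWithNormal {d : ℕ} (M : Set (Euc d)) (x n : Euc d) : Prop :=
  x ∈ frontier M ∧ ‖n‖ = 1 ∧
  ∃ U : Set (Euc d), IsOpen U ∧ x ∈ U ∧ ∃ g : Euc d → ℝ,
    ContDiffOn ℝ 1 g U ∧ (∀ z ∈ U, gradient g z ≠ 0) ∧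
    M ∩ U = {z ∈ U | g z ≤ 0} ∧ frontier M ∩ U = {z ∈ U | g z = 0} ∧
    gradient g x = ‖gradient g x‖ • n

/-- `M` is a compact domain with piecewise `C¹` boundary, with singular set `sing`:
`M` is compact, equal to the closure of its interior, and its boundary is a `C¹`
hypersurface away from `sing`, a subset of the boundary with zero `(d−1)`-dimensional
upper Minkowski content. -/
def PiecewiseC1CompactDomain {d : ℕ} (M sing : Set (Euc d)) : Prop :=
  IsCompact M ∧ M = closure (interior M) ∧ sing ⊆ frontier M ∧
  ZeroMinkowskiContent sing ∧
  ∀ x ∈ frontier M \ sing, ∃ n : Euc d, IsC1BoundaryPointWithNormal M x n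

/-- The support function `h_N(u) = sup_{y ∈ N} ⟨y, u⟩` of a bounded set `N`. -/
def suppFn {d : ℕ} (N : Set (Euc d)) (u : Euc d) : ℝ :=
  sSup ((fun y : Euc d => ⟪y, u⟫_ℝ) '' N)

/-- The point `(a, b) ∈ ℝ²` (Euclidean plane). -/
def pt2 (a b : ℝ) : Euc 2 := (EuclideanSpace.equiv (Fin 2) ℝ).symm ![a, b]


lemma L1 {ε : ℝ} (hε : 0 ≤ ε) (a b : ℝ) :
    (∃ t : ℝ, |t| ≤ ε ∧ a^2 + (b - t)^2 ≤ 1) ↔ a^2 + (max (|b| - ε) 0)^2 ≤ 1 := by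
  constructor
  · rintro ⟨t, ht, h⟩
    have h1 : |b| - |t| ≤ |b - t| := abs_sub_abs_le_abs_sub b t
    have h2 : max (|b| - ε) 0 ≤ |b - t| := max_le (by linarith) (abs_nonneg _)
    have h3 : (max (|b| - ε) 0)^2 ≤ |b - t|^2 :=
      pow_le_pow_left₀ (le_max_right _ _) h2 2
    rw [sq_abs] at h3; linarith
  · rintro h
    refine ⟨max (-ε) (min ε b), ?_, ?_⟩
    · rw [abs_le]
      exact ⟨le_max_left _ _, max_le (by linarith) (min_le_left _ _)⟩
    · rcases lt_or_ge ε b with h1 | h1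
      · rw [min_eq_left h1.le, max_eq_right (neg_le_self hε)]
        rw [abs_of_nonneg (le_trans hε h1.le), max_eq_left (by linarith)] at h
        exact h
      · rcases lt_or_ge b (-ε) with h2 | h2
        · rw [min_eq_right (by linarith), max_eq_left (by linarith)]
          rw [abs_of_neg (by linarith), max_eq_left (by linarith)] at h
          nlinarith [h]
        · rw [min_eq_right h1, max_eq_right h2, sub_self]
          rw [max_eq_right (by simp [abs_le]; constructor <;> linarith)] at h
          simpa using h

@[simp] lemma pt2_0 (a b : ℝ) : pt2 a b 0 = a := rfl
@[simp] lemma pt2_1 (a b : ℝ) : pt2 a b 1 = b := rfl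

lemma mem_K (x : Euc 2) : x ∈ closedBall (0 : Euc 2) 1 ↔ (x 0)^2 + (x 1)^2 ≤ 1 := by
  rw [mem_closedBall_zero_iff, EuclideanSpace.norm_eq, Fin.sum_univ_two,
    show (1:ℝ) = Real.sqrt 1 by simp, Real.sqrt_le_sqrt_iff (by positivity)]
  simp

lemma seg_v_iff (y : Euc 2) :
    y ∈ segment ℝ (pt2 0 (-1)) (pt2 0 1) ↔ ∃ u : ℝ, |u| ≤ 1 ∧ y = pt2 0 u := by
  rw [segment_eq_image]
  constructor
  · rintro ⟨θ, hθ, rfl⟩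
    simp only [mem_Icc] at hθ
    refine ⟨2*θ - 1, by rw [abs_le]; constructor <;> linarith, ?_⟩
    ext i
    fin_cases i <;> simp [pt2] <;> ring
  · rintro ⟨u, hu, rfl⟩
    rw [abs_le] at hu
    refine ⟨(u+1)/2, by simp only [Set.mem_Icc]; constructor <;> linarith, ?_⟩
    ext i
    fin_cases i <;> simp [pt2] <;> ring

lemma seg_h_iff (y : Euc 2) :
    y ∈ segment ℝ (pt2 (-1) 0) (pt2 1 0) ↔ ∃ u : ℝ, |u| ≤ 1 ∧ y = pt2 u 0 := by
  rw [segment_eq_image]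
  constructor
  · rintro ⟨θ, hθ, rfl⟩
    simp only [mem_Icc] at hθ
    refine ⟨2*θ - 1, by rw [abs_le]; constructor <;> linarith, ?_⟩
    ext i
    fin_cases i <;> simp [pt2] <;> ring
  · rintro ⟨u, hu, rfl⟩
    rw [abs_le] at hu
    refine ⟨(u+1)/2, by simp only [Set.mem_Icc]; constructor <;> linarith, ?_⟩
    ext i
    fin_cases i <;> simp [pt2] <;> ring

lemma mem_add_seg_v {ε : ℝ} (hε : 0 < ε) (x : Euc 2) :
    x ∈ closedBall (0 : Euc 2) 1 + ε • segment ℝ (pt2 0 (-1)) (pt2 0 1) ↔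
      ∃ t : ℝ, |t| ≤ ε ∧ (x 0)^2 + (x 1 - t)^2 ≤ 1 := by
  rw [Set.mem_add]
  constructor
  · rintro ⟨a, ha, b, hb, hab⟩
    rcases hb with ⟨y, hy, rfl⟩
    rcases (seg_v_iff y).1 hy with ⟨u, hu, rfl⟩
    refine ⟨ε * u, ?_, ?_⟩
    · rw [abs_mul, abs_of_pos hε]
      nlinarith [abs_nonneg u]
    · have h0 := congrArg (fun v : Euc 2 => v 0) hab
      have h1 := congrArg (fun v : Euc 2 => v 1) hab
      simp only [PiLp.add_apply, PiLp.smul_apply, pt2_0, pt2_1, smul_eq_mul, mul_zero] at h0 h1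
      rw [mem_K] at ha
      have e0 : a 0 = x 0 := by linarith
      have e1 : a 1 = x 1 - ε * u := by linarith
      rw [e0, e1] at ha
      exact ha
  · rintro ⟨t, ht, h⟩
    refine ⟨x - ε • pt2 0 (t/ε), ?_, ε • pt2 0 (t/ε),
      Set.smul_mem_smul_set ((seg_v_iff _).2 ⟨t/ε, ?_, rfl⟩), by abel⟩
    · rw [mem_K]
      have : ε * (t/ε) = t := by field_simp
      simp only [PiLp.sub_apply, PiLp.smul_apply, pt2_0, pt2_1, smul_eq_mul, mul_zero, this]
      simpa using h
    · rw [abs_div, abs_of_pos hε, div_le_one hε]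
      exact ht

lemma mem_add_seg_h {ε : ℝ} (hε : 0 < ε) (x : Euc 2) :
    x ∈ closedBall (0 : Euc 2) 1 + ε • segment ℝ (pt2 (-1) 0) (pt2 1 0) ↔
      ∃ t : ℝ, |t| ≤ ε ∧ (x 0 - t)^2 + (x 1)^2 ≤ 1 := by
  rw [Set.mem_add]
  constructor
  · rintro ⟨a, ha, b, hb, hab⟩
    rcases hb with ⟨y, hy, rfl⟩
    rcases (seg_h_iff y).1 hy with ⟨u, hu, rfl⟩
    refine ⟨ε * u, ?_, ?_⟩
    · rw [abs_mul, abs_of_pos hε]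
      nlinarith [abs_nonneg u]
    · have h0 := congrArg (fun v : Euc 2 => v 0) hab
      have h1 := congrArg (fun v : Euc 2 => v 1) hab
      simp only [PiLp.add_apply, PiLp.smul_apply, pt2_0, pt2_1, smul_eq_mul, mul_zero] at h0 h1
      rw [mem_K] at ha
      have e0 : a 0 = x 0 - ε * u := by linarith
      have e1 : a 1 = x 1 := by linarith
      rw [e0, e1] at ha
      exact ha
  · rintro ⟨t, ht, h⟩
    refine ⟨x - ε • pt2 (t/ε) 0, ?_, ε • pt2 (t/ε) 0,
      Set.smul_mem_smul_set ((seg_h_iff _).2 ⟨t/ε, ?_, rfl⟩), by abel⟩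
    · rw [mem_K]
      have : ε * (t/ε) = t := by field_simp
      simp only [PiLp.sub_apply, PiLp.smul_apply, pt2_0, pt2_1, smul_eq_mul, mul_zero, this]
      simpa using h
    · rw [abs_div, abs_of_pos hε, div_le_one hε]
      exact ht

def xs (ε : ℝ) : ℝ := (ε + Real.sqrt (2 - ε^2)) / 2

lemma xs_sq {ε : ℝ} (h0 : 0 < ε) (h1 : ε < 1) :
    2*(xs ε)^2 - 2*ε*(xs ε) + ε^2 = 1 := by
  have hs : Real.sqrt (2-ε^2) ^ 2 = 2 - ε^2 := Real.sq_sqrt (by nlinarith)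
  unfold xs; nlinarith [hs]

lemma xs_gt {ε : ℝ} (h0 : 0 < ε) (h1 : ε < 1) : ε < xs ε := by
  have hs : Real.sqrt (2-ε^2) ^ 2 = 2 - ε^2 := Real.sq_sqrt (by nlinarith)
  have hsnn : 0 ≤ Real.sqrt (2-ε^2) := Real.sqrt_nonneg _
  unfold xs; nlinarith [hs, hsnn]

lemma xs_lt {ε : ℝ} (h0 : 0 < ε) (h1 : ε < 1) : xs ε < 1 := by
  have hs : Real.sqrt (2-ε^2) ^ 2 = 2 - ε^2 := Real.sq_sqrt (by nlinarith)
  have hsnn : 0 ≤ Real.sqrt (2-ε^2) := Real.sqrt_nonneg _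
  have hq : 0 < (1-ε)^2 := pow_pos (by linarith) 2
  unfold xs; nlinarith [hs, hsnn, hq]

lemma C1 {ε a : ℝ} (h0 : 0 < ε) (h1 : ε < 1) (ha : |a| ≤ xs ε) :
    Real.sqrt (1 - (max (|a| - ε) 0)^2) ≤ ε + Real.sqrt (1 - a^2) := by
  have hc := xs_sq h0 h1
  have hcl := xs_lt h0 h1
  have hcg := xs_gt h0 h1
  have habs : 0 ≤ |a| := abs_nonneg a
  have h2 : a^2 ≤ 1 := by nlinarith [sq_abs a]
  have hr := Real.sq_sqrt (show (0:ℝ) ≤ 1 - a^2 by nlinarith)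
  have hrnn := Real.sqrt_nonneg (1 - a^2)
  rw [show ε + Real.sqrt (1-a^2) = Real.sqrt ((ε + Real.sqrt (1-a^2))^2) from
    (Real.sqrt_sq (by linarith [Real.sqrt_nonneg (1-a^2)])).symm]
  apply Real.sqrt_le_sqrt
  rcases le_total (|a|) ε with hcase | hcase
  · rw [max_eq_right (by linarith)]
    nlinarith [sq_abs a]
  · rw [max_eq_left (by linarith)]
    have key : |a| - ε ≤ Real.sqrt (1-a^2) :=
      Real.le_sqrt_of_sq_le (by
        nlinarith [mul_nonneg (sub_nonneg.2 ha) (show (0:ℝ) ≤ |a| + xs ε - ε by nlinarith),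
          sq_abs a])
    nlinarith [sq_abs a]

lemma C2 {ε a : ℝ} (h0 : 0 < ε) (h1 : ε < 1) (ha : xs ε ≤ |a|) (ha1 : |a| ≤ 1) :
    ε + Real.sqrt (1 - a^2) ≤ Real.sqrt (1 - (|a| - ε)^2) := by
  have hc := xs_sq h0 h1
  have hcg := xs_gt h0 h1
  have habs : 0 ≤ |a| := abs_nonneg a
  have h2 : a^2 ≤ 1 := by nlinarith [sq_abs a]
  have hr := Real.sq_sqrt (show (0:ℝ) ≤ 1 - a^2 by nlinarith)
  have hrnn := Real.sqrt_nonneg (1 - a^2)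
  have ht2 : 0 ≤ 1 - (|a| - ε)^2 := by nlinarith
  have key : Real.sqrt (1-a^2) ≤ |a| - ε := by
    rw [show |a| - ε = Real.sqrt ((|a| - ε)^2) from (Real.sqrt_sq (by linarith)).symm]
    apply Real.sqrt_le_sqrt
    nlinarith [mul_nonneg (sub_nonneg.2 ha) (show (0:ℝ) ≤ |a| + xs ε - ε by nlinarith),
      sq_abs a]
  rw [show ε + Real.sqrt (1-a^2) = Real.sqrt ((ε + Real.sqrt (1-a^2))^2) from
    (Real.sqrt_sq (by linarith [Real.sqrt_nonneg (1-a^2)])).symm]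
  apply Real.sqrt_le_sqrt
  nlinarith [sq_abs a]

def T (ε : ℝ) : Set (ℝ × ℝ) :=
  {p | p.1^2 + (max (|p.2| - ε) 0)^2 ≤ 1 ∨ (max (|p.1| - ε) 0)^2 + p.2^2 ≤ 1}

lemma measurableSet_T (ε : ℝ) : MeasurableSet (T ε) := by
  unfold T
  rw [Set.setOf_or]
  exact (measurableSet_le (by fun_prop) measurable_const).union
    (measurableSet_le (by fun_prop) measurable_const)

lemma vol_sq_le (D : ℝ) : volume {b : ℝ | b^2 ≤ D} = ENNReal.ofReal (2 * Real.sqrt D) := by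
  rcases lt_or_ge D 0 with hD | hD
  · have he : {b : ℝ | b^2 ≤ D} = ∅ := by
      ext b; simp only [Set.mem_setOf_eq, Set.mem_empty_iff_false, iff_false, not_le]
      nlinarith [sq_nonneg b]
    rw [he, measure_empty, Real.sqrt_eq_zero_of_nonpos hD.le]
    simp
  · have he : {b : ℝ | b^2 ≤ D} = Icc (-Real.sqrt D) (Real.sqrt D) := by
      ext b
      simp only [Set.mem_setOf_eq, Set.mem_Icc, ← abs_le]
      constructor
      · intro h; exact Real.le_sqrt_of_sq_le (by rwa [sq_abs])
      · intro h
        have := pow_le_pow_left₀ (abs_nonneg b) h 2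
        rwa [sq_abs, Real.sq_sqrt hD] at this
    rw [he, Real.volume_Icc]
    congr 1; ring

lemma slice_inner {ε : ℝ} (h0 : 0 < ε) (h1 : ε < 1) {a : ℝ} (ha : |a| ≤ xs ε) :
    Prod.mk a ⁻¹' T ε = Icc (-(ε + Real.sqrt (1 - a^2))) (ε + Real.sqrt (1 - a^2)) := by
  have hcl := xs_lt h0 h1
  have ha2 : a^2 ≤ 1 := by nlinarith [sq_abs a, abs_nonneg a]
  have hr := Real.sq_sqrt (show (0:ℝ) ≤ 1 - a^2 by linarith)
  have hrnn := Real.sqrt_nonneg (1 - a^2)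
  ext b
  simp only [T, Set.mem_preimage, Set.mem_setOf_eq, Set.mem_Icc, ← abs_le]
  constructor
  · rintro (h | h)
    · have hm : (max (|b| - ε) 0)^2 ≤ Real.sqrt (1-a^2)^2 := by rw [hr]; linarith
      have : max (|b| - ε) 0 ≤ Real.sqrt (1-a^2) := by
        nlinarith [le_max_right (|b| - ε) (0:ℝ), hrnn]
      linarith [le_max_left (|b| - ε) (0:ℝ)]
    · have hb2 : |b|^2 ≤ 1 - (max (|a| - ε) 0)^2 := by rw [sq_abs]; linarith
      have := Real.le_sqrt_of_sq_le hb2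
      linarith [C1 h0 h1 ha]
  · intro h
    left
    have hm : max (|b| - ε) 0 ≤ Real.sqrt (1-a^2) := max_le (by linarith) hrnn
    have := pow_le_pow_left₀ (le_max_right (|b| - ε) 0) hm 2
    rw [hr] at this
    linarith

lemma slice_outer {ε : ℝ} (h0 : 0 < ε) (h1 : ε < 1) {a : ℝ} (ha : xs ε < |a|) :
    Prod.mk a ⁻¹' T ε = {b : ℝ | b^2 ≤ 1 - (|a| - ε)^2} := by
  have hcg := xs_gt h0 h1
  ext b
  simp only [T, Set.mem_preimage, Set.mem_setOf_eq]
  constructor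
  · rintro (h | h)
    · have ha1 : |a| ≤ 1 := by
        nlinarith [sq_abs a, sq_nonneg (max (|b| - ε) 0), abs_nonneg a]
      have hC := C2 h0 h1 ha.le ha1
      have hr := Real.sq_sqrt (show (0:ℝ) ≤ 1 - a^2 by nlinarith [sq_abs a])
      have hrnn := Real.sqrt_nonneg (1 - a^2)
      have hm : (max (|b| - ε) 0)^2 ≤ Real.sqrt (1-a^2)^2 := by rw [hr]; linarith
      have hm2 : max (|b| - ε) 0 ≤ Real.sqrt (1-a^2) := by
        nlinarith [le_max_right (|b| - ε) (0:ℝ), hrnn]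
      have hb : |b| ≤ Real.sqrt (1 - (|a| - ε)^2) := by
        linarith [le_max_left (|b| - ε) (0:ℝ)]
      have hD : (0:ℝ) ≤ 1 - (|a| - ε)^2 := by nlinarith [abs_nonneg a]
      nlinarith [Real.sq_sqrt hD, sq_abs b, abs_nonneg b, Real.sqrt_nonneg (1 - (|a| - ε)^2)]
    · rw [max_eq_left (by linarith)] at h
      linarith
  · intro h
    right
    rw [max_eq_left (by linarith)]
    linarith

lemma sum_eq {ε : ℝ} (hε : 0 < ε) :
    closedBall (0 : Euc 2) 1 +
      ε • (segment ℝ (pt2 0 (-1)) (pt2 0 1) ∪ segment ℝ (pt2 (-1) 0) (pt2 1 0)) =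
    (fun x : Euc 2 => ((x 0 : ℝ), x 1)) ⁻¹' (T ε) := by
  rw [Set.smul_set_union, Set.add_union]
  ext x
  simp only [Set.mem_union, Set.mem_preimage, T, Set.mem_setOf_eq]
  rw [mem_add_seg_v hε, mem_add_seg_h hε, L1 hε.le]
  have hh : (∃ t : ℝ, |t| ≤ ε ∧ (x 0 - t)^2 + (x 1)^2 ≤ 1) ↔
      (x 1)^2 + (max (|x 0| - ε) 0)^2 ≤ 1 := by
    rw [← L1 hε.le]
    constructor <;> rintro ⟨t, ht, h⟩ <;> exact ⟨t, ht, by linarith⟩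
  rw [hh]
  constructor <;> rintro (h | h)
  · left; exact h
  · right; linarith
  · left; exact h
  · right; linarith

lemma vol_sum {ε : ℝ} (hε : 0 < ε) :
    volume (closedBall (0 : Euc 2) 1 +
      ε • (segment ℝ (pt2 0 (-1)) (pt2 0 1) ∪ segment ℝ (pt2 (-1) 0) (pt2 1 0))) =
    volume (T ε) := by
  have mp_psi : MeasurePreserving (fun x : Euc 2 => ((x 0 : ℝ), x 1)) volume volume :=
    (volume_preserving_finTwoArrow ℝ).comp
      (EuclideanSpace.volume_preserving_symm_measurableEquiv_toLp (ι := Fin 2))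
  rw [sum_eq hε]
  exact mp_psi.measure_preimage (measurableSet_T ε).nullMeasurableSet

lemma hasDeriv_F2 {t : ℝ} (h1 : -1 < t) (h2 : t < 1) :
    HasDerivAt (fun t : ℝ => t * Real.sqrt (1 - t^2) + Real.arcsin t)
      (2 * Real.sqrt (1 - t^2)) t := by
  have hs : (0:ℝ) < 1 - t^2 := by nlinarith
  have hsq : Real.sqrt (1-t^2)^2 = 1-t^2 := Real.sq_sqrt hs.le
  have hsp : 0 < Real.sqrt (1-t^2) := Real.sqrt_pos.2 hs
  have h_inner : HasDerivAt (fun t : ℝ => 1 - t^2) (-2*t) t := by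
    simpa using ((hasDerivAt_pow 2 t).const_sub 1)
  have h_sqrt : HasDerivAt (fun t : ℝ => Real.sqrt (1 - t^2))
      (1/(2*Real.sqrt (1-t^2)) * (-2*t)) t :=
    (Real.hasDerivAt_sqrt hs.ne').comp t h_inner
  have h_mul : HasDerivAt (fun t : ℝ => t * Real.sqrt (1-t^2))
      (1 * Real.sqrt (1-t^2) + t * (1/(2*Real.sqrt (1-t^2)) * (-2*t))) t :=
    (hasDerivAt_id t).mul h_sqrt
  have h_arcsin := Real.hasDerivAt_arcsin (x := t) (ne_of_gt h1) (ne_of_lt h2)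
  refine (h_mul.add h_arcsin).congr_deriv ?_
  rw [one_mul]
  field_simp
  nlinarith [hsq, hsp]

lemma sqrt_one_sub_xs {ε : ℝ} (h0 : 0 < ε) (h1 : ε < 1) :
    Real.sqrt (1 - (xs ε)^2) = xs ε - ε := by
  rw [show 1 - (xs ε)^2 = (xs ε - ε)^2 by nlinarith [xs_sq h0 h1]]
  exact Real.sqrt_sq (by linarith [xs_gt h0 h1])

lemma arcsin_xs {ε : ℝ} (h0 : 0 < ε) (h1 : ε < 1) :
    Real.arcsin (xs ε - ε) = Real.pi/2 - Real.arcsin (xs ε) := by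
  have h : xs ε - ε = Real.cos (Real.arcsin (xs ε)) := by
    rw [Real.cos_arcsin, sqrt_one_sub_xs h0 h1]
  rw [h, ← Real.sin_pi_div_two_sub, Real.arcsin_sin]
  · linarith [Real.arcsin_le_pi_div_two (xs ε), Real.pi_pos]
  · have : 0 ≤ Real.arcsin (xs ε) := Real.arcsin_nonneg.2 (by linarith [xs_gt h0 h1])
    linarith

lemma int_Icc_val {ε : ℝ} (h0 : 0 < ε) (h1 : ε < 1) :
    ∫ a in (-(xs ε))..(xs ε), (2*ε + 2*Real.sqrt (1 - a^2)) =
      4*ε*xs ε + 2*(xs ε)*(xs ε - ε) + 2*Real.arcsin (xs ε) := by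
  have hcl := xs_lt h0 h1
  have hcg := xs_gt h0 h1
  have key : ∀ a ∈ Set.uIcc (-(xs ε)) (xs ε),
      HasDerivAt (fun a : ℝ => 2*ε*a + (a * Real.sqrt (1 - a^2) + Real.arcsin a))
        (2*ε + 2*Real.sqrt (1 - a^2)) a := by
    intro a ha
    rw [Set.uIcc_of_le (by linarith), Set.mem_Icc] at ha
    have h := ((hasDerivAt_id a).const_mul (2*ε)).add
      (hasDeriv_F2 (t := a) (by linarith) (by linarith))
    exact h.congr_deriv (by ring)
  rw [intervalIntegral.integral_eq_sub_of_hasDerivAt key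
    (Continuous.intervalIntegrable (by fun_prop) _ _)]
  have e1 : Real.sqrt (1 - (-(xs ε))^2) = xs ε - ε := by
    rw [neg_pow]; simpa using sqrt_one_sub_xs h0 h1
  rw [e1, sqrt_one_sub_xs h0 h1, Real.arcsin_neg]
  ring

lemma int_Ioc_val {ε : ℝ} (h0 : 0 < ε) (h1 : ε < 1) :
    ∫ a in (xs ε)..(1+ε), 2*Real.sqrt (1 - (a-ε)^2) =
      Real.arcsin (xs ε) - (xs ε)*(xs ε - ε) := by
  have hcl := xs_lt h0 h1
  have hcg := xs_gt h0 h1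
  have hderiv : ∀ a ∈ Set.Ioo (xs ε) (1+ε),
      HasDerivAt (fun a : ℝ => (a-ε) * Real.sqrt (1 - (a-ε)^2) + Real.arcsin (a-ε))
        (2*Real.sqrt (1 - (a-ε)^2)) a := by
    intro a ha
    have h2 : HasDerivAt (fun a : ℝ => a - ε) 1 a := (hasDerivAt_id a).sub_const ε
    rw [Set.mem_Ioo] at ha
    have h3 := (hasDeriv_F2 (t := a - ε) (by linarith [ha.1]) (by linarith [ha.2])).comp a h2
    exact h3.congr_deriv (by ring)
  have hcont : Continuous fun a : ℝ => (a-ε) * Real.sqrt (1 - (a-ε)^2) + Real.arcsin (a-ε) :=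
    ((continuous_id.sub continuous_const).mul (Real.continuous_sqrt.comp (by continuity))).add
      (Real.continuous_arcsin.comp (continuous_id.sub continuous_const))
  rw [intervalIntegral.integral_eq_sub_of_hasDerivAt_of_le (by linarith)
    hcont.continuousOn hderiv
    (Continuous.intervalIntegrable (by fun_prop) _ _)]
  have e1 : (1 + ε - ε) = (1:ℝ) := by ring
  rw [e1]
  have e2 : Real.sqrt (1 - (1:ℝ)^2) = 0 := by norm_num
  have e3 : Real.sqrt (1 - (xs ε - ε)^2) = xs ε := by
    rw [show 1 - (xs ε - ε)^2 = (xs ε)^2 by nlinarith [xs_sq h0 h1]]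
    exact Real.sqrt_sq (by linarith)
  rw [e2, e3, Real.arcsin_one, arcsin_xs h0 h1]
  ring

lemma outer_lintegral {ε : ℝ} (h0 : 0 < ε) (h1 : ε < 1) :
    ∫⁻ a in Set.Ioi (xs ε), ENNReal.ofReal (2*Real.sqrt (1-(a-ε)^2)) =
      ENNReal.ofReal (Real.arcsin (xs ε) - xs ε * (xs ε - ε)) := by
  have hcl := xs_lt h0 h1
  have hcg := xs_gt h0 h1
  have hq_cont : Continuous fun a : ℝ => 2*Real.sqrt (1-(a-ε)^2) := by fun_prop
  have hq_supp : HasCompactSupport fun a : ℝ => 2*Real.sqrt (1-(a-ε)^2) := by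
    apply HasCompactSupport.intro (isCompact_Icc (a := ε-1) (b := ε+1))
    intro x hx
    simp only [Set.mem_Icc, not_and_or, not_le] at hx
    have h : 1-(x-ε)^2 ≤ 0 := by rcases hx with h | h <;> nlinarith
    simp [Real.sqrt_eq_zero_of_nonpos h]
  have hq_int : Integrable (fun a : ℝ => 2*Real.sqrt (1-(a-ε)^2)) :=
    hq_cont.integrable_of_hasCompactSupport hq_supp
  rw [← ofReal_integral_eq_lintegral_ofReal hq_int.integrableOn
    (ae_of_all _ fun a => by positivity)]
  congr 1
  rw [← Set.Ioc_union_Ioi_eq_Ioi (show xs ε ≤ 1+ε by linarith),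
    MeasureTheory.setIntegral_union (Set.Ioc_disjoint_Ioi le_rfl) measurableSet_Ioi
      hq_int.integrableOn hq_int.integrableOn]
  have hzero : ∫ a in Set.Ioi (1+ε), 2*Real.sqrt (1-(a-ε)^2) = 0 := by
    rw [MeasureTheory.setIntegral_congr_fun measurableSet_Ioi
      (fun a (ha : a ∈ Set.Ioi (1+ε)) => by
        show 2*Real.sqrt (1-(a-ε)^2) = (fun _ : ℝ => (0:ℝ)) a
        have hh : 1-(a-ε)^2 ≤ 0 := by simp only [Set.mem_Ioi] at ha; nlinarith
        simp [Real.sqrt_eq_zero_of_nonpos hh])]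
    simp
  rw [hzero, add_zero, ← intervalIntegral.integral_of_le (by linarith), int_Ioc_val h0 h1]

lemma vol_T {ε : ℝ} (h0 : 0 < ε) (h1 : ε < 1) :
    volume (T ε) = ENNReal.ofReal (4*ε*xs ε + 4*Real.arcsin (xs ε)) := by
  have hcl := xs_lt h0 h1
  have hcg := xs_gt h0 h1
  have hBnn : 0 ≤ Real.arcsin (xs ε) - xs ε * (xs ε - ε) := by
    rw [← int_Ioc_val h0 h1]
    apply intervalIntegral.integral_nonneg (by linarith)
    intro u _; positivity
  have hANN : 0 ≤ 4*ε*xs ε + 2*(xs ε)*(xs ε - ε) + 2*Real.arcsin (xs ε) := by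
    have h4 : 0 ≤ Real.arcsin (xs ε) := Real.arcsin_nonneg.2 (by linarith)
    nlinarith
  -- slices on the right
  have hsliceR : ∀ a ∈ Set.Ioi (xs ε), volume (Prod.mk a ⁻¹' T ε) =
      ENNReal.ofReal (2*Real.sqrt (1-(a-ε)^2)) := by
    intro a ha
    simp only [Set.mem_Ioi] at ha
    have haa : |a| = a := abs_of_pos (by linarith)
    rw [slice_outer h0 h1 (by rw [haa]; exact ha), vol_sq_le, haa]
  have houter : ∫⁻ a in Set.Ioi (xs ε), volume (Prod.mk a ⁻¹' T ε) =
      ENNReal.ofReal (Real.arcsin (xs ε) - xs ε * (xs ε - ε)) := by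
    rw [setLIntegral_congr_fun measurableSet_Ioi hsliceR]
    exact outer_lintegral h0 h1
  have hleft : ∫⁻ a in Set.Iio (-(xs ε)), volume (Prod.mk a ⁻¹' T ε) =
      ENNReal.ofReal (Real.arcsin (xs ε) - xs ε * (xs ε - ε)) := by
    have hemb : MeasurableEmbedding (Neg.neg : ℝ → ℝ) := (Homeomorph.neg ℝ).measurableEmbedding
    have hmp := (Measure.measurePreserving_neg (volume : Measure ℝ)).setLIntegral_comp_emb hemb
        (fun a => volume (Prod.mk a ⁻¹' T ε)) (Set.Ioi (xs ε))
    rw [Set.image_neg_Ioi] at hmp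
    rw [← hmp]
    have hsliceL : ∀ a ∈ Set.Ioi (xs ε), volume (Prod.mk (-a) ⁻¹' T ε) =
        ENNReal.ofReal (2*Real.sqrt (1-(a-ε)^2)) := by
      intro a ha
      simp only [Set.mem_Ioi] at ha
      have haa : |(-a)| = a := by rw [abs_neg]; exact abs_of_pos (by linarith)
      rw [slice_outer h0 h1 (by rw [haa]; exact ha), vol_sq_le, haa]
    rw [setLIntegral_congr_fun measurableSet_Ioi hsliceL]
    exact outer_lintegral h0 h1
  have hinner : ∫⁻ a in Set.Icc (-(xs ε)) (xs ε), volume (Prod.mk a ⁻¹' T ε) =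
      ENNReal.ofReal (4*ε*xs ε + 2*(xs ε)*(xs ε - ε) + 2*Real.arcsin (xs ε)) := by
    have hg_cont : Continuous (fun a : ℝ => 2*ε + 2*Real.sqrt (1-a^2)) := by fun_prop
    have hslice : ∀ a ∈ Set.Icc (-(xs ε)) (xs ε), volume (Prod.mk a ⁻¹' T ε) =
        ENNReal.ofReal (2*ε + 2*Real.sqrt (1-a^2)) := by
      intro a ha
      simp only [Set.mem_Icc] at ha
      rw [slice_inner h0 h1 (abs_le.2 ⟨ha.1, ha.2⟩), Real.volume_Icc]
      congr 1; ring
    rw [setLIntegral_congr_fun measurableSet_Icc hslice]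
    rw [← ofReal_integral_eq_lintegral_ofReal hg_cont.continuousOn.integrableOn_Icc
      (ae_of_all _ fun a => by simp only [Pi.zero_apply]; linarith [Real.sqrt_nonneg (1-a^2)])]
    congr 1
    rw [MeasureTheory.integral_Icc_eq_integral_Ioc,
      ← intervalIntegral.integral_of_le (by linarith), int_Icc_val h0 h1]
  have hdisj : Disjoint (Set.Icc (-(xs ε)) (xs ε)) (Set.Ioi (xs ε)) := by
    rw [Set.disjoint_left]
    rintro x hx hx'
    exact absurd hx.2 (not_le.2 hx')
  rw [Measure.volume_eq_prod, Measure.prod_apply (measurableSet_T ε)]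
  rw [← lintegral_add_compl (fun a => volume (Prod.mk a ⁻¹' T ε)) measurableSet_Ici (A := Set.Ici (-(xs ε)))]
  rw [Set.compl_Ici, ← Set.Icc_union_Ioi_eq_Ici (show -(xs ε) ≤ xs ε by linarith),
    lintegral_union measurableSet_Ioi hdisj]
  rw [hinner, houter, hleft]
  rw [← ENNReal.ofReal_add hANN hBnn, ← ENNReal.ofReal_add (by linarith) hBnn]
  congr 1; ring

lemma vol_K : volume (closedBall (0 : Euc 2) 1) = ENNReal.ofReal Real.pi := by
  rw [EuclideanSpace.volume_closedBall]
  simp only [Fintype.card_fin]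
  norm_num
  rw [← ENNReal.ofReal_pow (Real.sqrt_nonneg _), Real.sq_sqrt Real.pi_pos.le]

lemma sqrt_two_facts : Real.sqrt 2 ^ 2 = 2 ∧ 1 < Real.sqrt 2 ∧ Real.sqrt 2 < 2 := by
  have h := Real.sq_sqrt (show (0:ℝ) ≤ 2 by norm_num)
  have hn := Real.sqrt_nonneg 2
  exact ⟨h, by nlinarith, by nlinarith⟩

lemma xs_zero : xs 0 = Real.sqrt 2 / 2 := by
  unfold xs; norm_num

lemma hasDeriv_W : HasDerivAt (fun ε : ℝ => 4*ε*xs ε + 4*Real.arcsin (xs ε))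
    (4*Real.sqrt 2) 0 := by
  obtain ⟨hsq, hgt, hlt⟩ := sqrt_two_facts
  have hsn := Real.sqrt_nonneg 2
  have h_inner : HasDerivAt (fun ε : ℝ => 2 - ε^2) 0 (0:ℝ) := by
    simpa using ((hasDerivAt_pow 2 (0:ℝ)).const_sub 2)
  have h_sqrt : HasDerivAt (fun ε : ℝ => Real.sqrt (2 - ε^2))
      (1/(2*Real.sqrt (2 - (0:ℝ)^2)) * 0) 0 :=
    (Real.hasDerivAt_sqrt (by norm_num)).comp 0 h_inner
  have h_xs : HasDerivAt xs ((1 + 1/(2*Real.sqrt (2 - (0:ℝ)^2)) * 0)/2) 0 := by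
    exact (((hasDerivAt_id 0).add h_sqrt).div_const 2)
  have h_xs' : HasDerivAt xs (1/2) 0 := by
    convert h_xs using 1; norm_num
  have hne1 : xs 0 ≠ -1 := by rw [xs_zero]; nlinarith
  have hne2 : xs 0 ≠ 1 := by rw [xs_zero]; nlinarith
  have h_arcsin := (Real.hasDerivAt_arcsin hne1 hne2).comp 0 h_xs'
  have h_prod : HasDerivAt (fun ε : ℝ => 4*ε*xs ε) (4 * xs 0 + 4*0*(1/2)) 0 := by
    have := (((hasDerivAt_id (0:ℝ)).const_mul 4).mul h_xs')
    exact this.congr_deriv (by norm_num)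
  have h_sum := h_prod.add (h_arcsin.const_mul 4)
  refine h_sum.congr_deriv (Eq.symm ?_)
  rw [xs_zero]
  have e1 : Real.sqrt (1 - (Real.sqrt 2/2)^2) = Real.sqrt 2 / 2 := by
    rw [show 1 - (Real.sqrt 2/2)^2 = (Real.sqrt 2/2)^2 by nlinarith]
    exact Real.sqrt_sq (by positivity)
  show 4*Real.sqrt 2 = 4 * (Real.sqrt 2/2) + 4*0*(1/2) + 4 * (1/Real.sqrt (1 - (Real.sqrt 2/2)^2) * (1/2))
  rw [e1]
  field_simp
  nlinarith [hsq]

lemma arcsin_xs_zero : Real.arcsin (xs 0) = Real.pi / 4 := by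
  rw [xs_zero, ← Real.sin_pi_div_four]
  exact Real.arcsin_sin (by linarith [Real.pi_pos]) (by linarith [Real.pi_pos])

lemma tendsto_W : Tendsto (fun ε : ℝ => ((4*ε*xs ε + 4*Real.arcsin (xs ε)) - Real.pi)/ε)
    (𝓝[>] (0:ℝ)) (𝓝 (4*Real.sqrt 2)) := by
  have h := hasDerivAt_iff_tendsto_slope.1 hasDeriv_W
  have hmono : 𝓝[>] (0:ℝ) ≤ 𝓝[≠] (0:ℝ) :=
    nhdsWithin_mono 0 (fun x hx => ne_of_gt hx)
  have h2 := h.mono_left hmono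
  apply h2.congr
  intro ε
  rw [slope_def_field]
  have h3 : (4*(0:ℝ)*xs 0 + 4*Real.arcsin (xs 0)) = Real.pi := by
    rw [arcsin_xs_zero]; ring
  rw [h3, sub_zero]

/-- In `ℝ²`, for `K` the closed unit disk and
`N = ℓ₁ ∪ ℓ₂` the union of the segments from `(0,−1)` to `(0,1)` and from
`(−1,0)` to `(1,0)`, the limit `D_N(K) = lim_{ε→0⁺} (vol(K + εN) − vol(K))/ε`
exists and equals `4√2`. -/
theorem minkDeriv_disk_plus_sign
    (K N : Set (Euc 2)) (hK : K = closedBall (0 : Euc 2) 1)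
    (hN : N = segment ℝ (pt2 0 (-1)) (pt2 0 1) ∪ segment ℝ (pt2 (-1) 0) (pt2 1 0)) :
    HasMinkDeriv N K (4 * Real.sqrt 2) := by
  subst hK hN
  unfold HasMinkDeriv
  have key : ∀ᶠ ε in 𝓝[>] (0:ℝ),
      ((4*ε*xs ε + 4*Real.arcsin (xs ε)) - Real.pi)/ε =
      ((volume (closedBall (0:Euc 2) 1 + ε • (segment ℝ (pt2 0 (-1)) (pt2 0 1) ∪
          segment ℝ (pt2 (-1) 0) (pt2 1 0)))).toReal -
        (volume (closedBall (0:Euc 2) 1)).toReal) / ε := by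
    filter_upwards [Ioo_mem_nhdsGT_of_mem
      (show (0:ℝ) ∈ Set.Ico (0:ℝ) 1 from ⟨le_refl 0, one_pos⟩)] with ε hε
    obtain ⟨h0, h1⟩ := hε
    have hWnn : 0 ≤ 4*ε*xs ε + 4*Real.arcsin (xs ε) := by
      have harc := Real.arcsin_nonneg.2 (le_of_lt (lt_trans h0 (xs_gt h0 h1)))
      nlinarith [xs_gt h0 h1]
    rw [vol_sum h0, vol_T h0 h1, vol_K, ENNReal.toReal_ofReal hWnn,
      ENNReal.toReal_ofReal Real.pi_pos.le]
  exact Tendsto.congr' key tendsto_W
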